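/- A continuous substitution ρ on a compact Hausdorff alphabet is primitive if and only if for every finite open cover {U_1,...,U_ℓ} of A there exists p ≥ 0 such that for all a ∈ A and all 1 ≤ i ≤ ℓ, some letter of ρ^p(a) lies in U_i. -/
import Mathlib


open Filter Topology

/-- The left shift on bi-infinite sequences. -/
def shift {A : Type*} (w : ℤ → A) : ℤ → A := fun i => w (i + 1)

/-- The finite subword of `w` of length `n` starting at position `j`. -/
def word {A : Type*} (w : ℤ → A) (j : ℤ) (n : ℕ) : List A :=
  (List.range n).map fun i => w (j + (i : ℤ))

/-- The subshift determined by a language `L ⊆ A*`. -/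
def subshiftOf {A : Type*} (L : Set (List A)) : Set (ℤ → A) :=
  {w | ∀ (j : ℤ) (n : ℕ), word w j n ∈ L}

/-- The set of finite subwords of a bi-infinite sequence. -/
def subwordsOf {A : Type*} (w : ℤ → A) : Set (List A) :=
  {u | ∃ (j : ℤ) (n : ℕ), u = word w j n}

/-- The language of a bi-infinite sequence: the closure of its set of finite subwords. -/
def langOfSeq {A : Type*} [TopologicalSpace A] (w : ℤ → A) : Set (List A) :=
  closure (subwordsOf w)

/-- The shift orbit of a bi-infinite sequence. -/
def orbit {A : Type*} (w : ℤ → A) : Set (ℤ → A) :=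
  {x | ∃ k : ℤ, x = fun i => w (i + k)}

/-- Application of a substitution to a finite word, by concatenation. -/
def substWord {A : Type*} (ρ : A → List A) (u : List A) : List A := u.flatMap ρ

/-- The `n`-th iterated substitute (level-`n` supertile) of a letter. -/
def substIter {A : Type*} (ρ : A → List A) (n : ℕ) (a : A) : List A :=
  (substWord ρ)^[n] [a]

/-- The language of a substitution: closure of the set of words generated by `ρ`. -/
def lang {A : Type*} [TopologicalSpace A] (ρ : A → List A) : Set (List A) :=
  closure {u : List A | ∃ (a : A) (k : ℕ), u <:+: substIter ρ k a}

/-- The legal `n`-letter words of a substitution. -/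
def langN {A : Type*} [TopologicalSpace A] (ρ : A → List A) (n : ℕ) : Set (List A) :=
  closure {u : List A | u.length = n ∧ ∃ (a : A) (k : ℕ), u <:+: substIter ρ k a}

/-- Primitivity of a substitution on a topological alphabet. -/
def Primitive {A : Type*} [TopologicalSpace A] (ρ : A → List A) : Prop :=
  ∀ U : Set A, IsOpen U → U.Nonempty → ∃ p : ℕ, ∀ a : A, ∃ b ∈ substIter ρ p a, b ∈ U

/-- `y` is the image of the bi-infinite sequence `w` under the substitution `ρ`,
with the image of `w 0` starting at position `0`. -/
def IsSubstOf {A : Type*} (ρ : A → List A) (w y : ℤ → A) : Prop :=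
  ∃ o : ℤ → ℤ, o 0 = 0 ∧ (∀ k : ℤ, o (k + 1) = o k + (ρ (w k)).length) ∧
    ∀ (k : ℤ) (i : ℕ) (h : i < (ρ (w k)).length), y (o k + (i : ℤ)) = (ρ (w k)).get ⟨i, h⟩

lemma substWord_iter_flatMap {A : Type*} (ρ : A → List A) (p : ℕ) (u : List A) :
    (substWord ρ)^[p] u = u.flatMap (fun a => (substWord ρ)^[p] [a]) := by
  induction p generalizing u with
  | zero => simp
  | succ n ih =>
    simp only [Function.iterate_succ_apply]
    rw [ih (substWord ρ u)]
    show (u.flatMap ρ).flatMap _ = u.flatMap fun a => (substWord ρ)^[n] (substWord ρ [a])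
    rw [List.flatMap_assoc]
    congr 1
    funext a
    rw [show substWord ρ [a] = ρ a by simp [substWord], ← ih]

lemma mem_substIter_add {A : Type*} {ρ : A → List A} {p q : ℕ} {a b x : A}
    (hb : b ∈ substIter ρ q a) (hx : x ∈ substIter ρ p b) :
    x ∈ substIter ρ (p + q) a := by
  unfold substIter at *
  rw [Function.iterate_add_apply, substWord_iter_flatMap, List.mem_flatMap]
  exact ⟨b, hb, hx⟩

lemma substIter_ne_nil {A : Type*} {ρ : A → List A} (h1 : ∀ a : A, 1 ≤ (ρ a).length)
    (p : ℕ) (a : A) : substIter ρ p a ≠ [] := by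
  induction p with
  | zero => simp [substIter]
  | succ n ih =>
    unfold substIter at *
    rw [Function.iterate_succ_apply']
    show ((substWord ρ)^[n] [a]).flatMap ρ ≠ []
    intro h
    rcases List.exists_mem_of_ne_nil _ ih with ⟨b, hb⟩
    have : ρ b ≠ [] := by
      intro hρb; have := h1 b; rw [hρb] at this; simp at this
    rcases List.exists_mem_of_ne_nil _ this with ⟨c, hc⟩
    have : c ∈ ((substWord ρ)^[n] [a]).flatMap ρ := List.mem_flatMap.2 ⟨b, hb, hc⟩
    rw [h] at this; simp at this

/-- A continuous substitution is primitive iff for every finite open cover `{U_1,…,U_ℓ}` of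
`A` (by non-empty open sets) there is `p ≥ 0` such that for every `a ∈ A` and every `i`,
some letter of `ρ^p(a)` lies in `U_i`. -/
theorem stmt11 {A : Type*} [TopologicalSpace A] [CompactSpace A] [T2Space A]
    (ρ : A → List A) (hρ : Continuous ρ) (h1 : ∀ a : A, 1 ≤ (ρ a).length) :
    Primitive ρ ↔ ∀ (l : ℕ) (U : Fin l → Set A), (∀ i, IsOpen (U i)) →
      (∀ i, (U i).Nonempty) → (⋃ i, U i) = Set.univ →
      ∃ p : ℕ, ∀ a : A, ∀ i : Fin l, ∃ b ∈ substIter ρ p a, b ∈ U i := by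
  constructor
  · intro hP l U hopen hne _
    choose pf hpf using fun i => hP (U i) (hopen i) (hne i)
    refine ⟨Finset.univ.sup pf, fun a i => ?_⟩
    have hle : pf i ≤ Finset.univ.sup pf := Finset.le_sup (Finset.mem_univ i)
    rcases List.exists_mem_of_ne_nil _
      (substIter_ne_nil h1 (Finset.univ.sup pf - pf i) a) with ⟨c, hc⟩
    rcases hpf i c with ⟨b, hb, hbU⟩
    have := mem_substIter_add hc hb
    rw [Nat.add_sub_cancel' hle] at this
    exact ⟨b, this, hbU⟩
  · intro h U hU hUne
    rcases h 2 ![U, Set.univ] (by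
        intro i; fin_cases i <;> simp [hU, isOpen_univ])
      (by intro i; fin_cases i <;> simp [hUne]; exact ⟨hUne.some, trivial⟩)
      (by apply Set.eq_univ_of_univ_subset; intro x _
          exact Set.mem_iUnion.2 ⟨1, by simp⟩) with ⟨p, hp⟩
    exact ⟨p, fun a => by simpa using hp a 0⟩
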